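/- For closed cones K₁ ⊆ K₂ ⊆ ℝ^d, the cone angles satisfy ∠K₁ ≤ 2·∠K₂, where cos(∠K) := max_{u∈K∩S^{d−1}} min_{u'∈K∩S^{d−1}} ⟨u,u'⟩. Moreover, this bound is tight: there exist cones K₁ ⊆ K₂ with ∠K₁ = 2·∠K₂. -/

import Mathlib

open scoped BigOperators RealInnerProductSpace

noncomputable section

/-- `cos(∠K) = max_{u ∈ K ∩ S} min_{u' ∈ K ∩ S} ⟨u, u'⟩`; the angle is recovered via `arccos`. -/
def coneAngle {d : ℕ} (K : Set (EuclideanSpace ℝ (Fin d))) : ℝ :=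
  Real.arccos (sSup ((fun u => sInf ((fun v => (⟪u, v⟫ : ℝ)) ''
    (K ∩ Metric.sphere 0 1))) '' (K ∩ Metric.sphere 0 1)))

open Real Set Filter Topology


lemma arccos_anti : Antitone Real.arccos := fun x y h => by
  simp only [Real.arccos_eq_pi_div_two_sub_arcsin]
  linarith [Real.monotone_arcsin h]

lemma arccos_inner_triangle {E : Type*} [NormedAddCommGroup E] [InnerProductSpace ℝ E]
    {a b c : E} (ha : ‖a‖ = 1) (hb : ‖b‖ = 1) (hc : ‖c‖ = 1) :
    Real.arccos ⟪a, c⟫ ≤ Real.arccos ⟪a, b⟫ + Real.arccos ⟪b, c⟫ := by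
  set p := (⟪a, b⟫ : ℝ) with hp
  set q := (⟪b, c⟫ : ℝ) with hq
  have hp1 : |p| ≤ 1 := by simpa [ha, hb] using abs_real_inner_le_norm a b
  have hq1 : |q| ≤ 1 := by simpa [hb, hc] using abs_real_inner_le_norm b c
  have hp1' := abs_le.mp hp1
  have hq1' := abs_le.mp hq1
  have hna : ‖a - p • b‖ = Real.sqrt (1 - p ^ 2) := by
    rw [← Real.sqrt_sq (norm_nonneg _)]
    congr 1
    rw [norm_sub_sq_real, real_inner_smul_right, norm_smul, ha, hb]
    rw [Real.norm_eq_abs, mul_one, sq_abs]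
    ring
  have hnc : ‖c - q • b‖ = Real.sqrt (1 - q ^ 2) := by
    rw [← Real.sqrt_sq (norm_nonneg _)]
    congr 1
    rw [norm_sub_sq_real, real_inner_smul_right, norm_smul, hc, hb]
    rw [Real.norm_eq_abs, mul_one, sq_abs]
    have h3 : (⟪c, b⟫ : ℝ) = q := real_inner_comm b c
    rw [h3]; ring
  have hexp : (⟪a - p • b, c - q • b⟫ : ℝ) = ⟪a, c⟫ - p * q := by
    simp only [inner_sub_left, inner_sub_right, real_inner_smul_left, real_inner_smul_right,
      real_inner_self_eq_norm_sq, hb]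
    have h1 : (⟪b, c⟫ : ℝ) = q := hq.symm
    have h2 : (⟪a, b⟫ : ℝ) = p := hp.symm
    rw [h1, h2]; ring
  have hCS := abs_real_inner_le_norm (a - p • b) (c - q • b)
  rw [hna, hnc, hexp] at hCS
  have key : p * q - Real.sqrt (1 - p ^ 2) * Real.sqrt (1 - q ^ 2) ≤ (⟪a, c⟫ : ℝ) := by
    have := neg_abs_le ((⟪a, c⟫ : ℝ) - p * q)
    linarith [abs_le.mp hCS |>.1]
  have hcos : Real.cos (Real.arccos p + Real.arccos q)
      = p * q - Real.sqrt (1 - p ^ 2) * Real.sqrt (1 - q ^ 2) := by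
    rw [Real.cos_add, Real.cos_arccos hp1'.1 hp1'.2, Real.cos_arccos hq1'.1 hq1'.2,
      Real.sin_arccos, Real.sin_arccos]
  by_cases hπ : Real.arccos p + Real.arccos q ≤ π
  · calc Real.arccos ⟪a, c⟫ ≤ Real.arccos (Real.cos (Real.arccos p + Real.arccos q)) := by
          exact arccos_anti (by rw [hcos]; exact key)
      _ = Real.arccos p + Real.arccos q :=
          Real.arccos_cos (add_nonneg (Real.arccos_nonneg _) (Real.arccos_nonneg _)) hπ
  · linarith [Real.arccos_le_pi (⟪a, c⟫ : ℝ)]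

lemma coneAngle_part1 (d : ℕ) (K₁ K₂ : Set (EuclideanSpace ℝ (Fin d)))
    (hne1 : (K₁ ∩ Metric.sphere 0 1).Nonempty) (hne2 : (K₂ ∩ Metric.sphere 0 1).Nonempty)
    (hsub : K₁ ⊆ K₂) : coneAngle K₁ ≤ 2 * coneAngle K₂ := by
  unfold coneAngle

  set S₁ := K₁ ∩ Metric.sphere 0 1 with hS₁def
  set S₂ := K₂ ∩ Metric.sphere 0 1 with hS₂def
  set f₁ : EuclideanSpace ℝ (Fin d) → ℝ := fun u => sInf ((fun v => (⟪u, v⟫ : ℝ)) '' S₁) with hf₁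
  set f₂ : EuclideanSpace ℝ (Fin d) → ℝ := fun u => sInf ((fun v => (⟪u, v⟫ : ℝ)) '' S₂) with hf₂
  have hS12 : S₁ ⊆ S₂ := inter_subset_inter_left _ hsub
  have hnorm : ∀ x ∈ S₂, ‖x‖ = 1 := fun x hx => by
    simpa using mem_sphere_zero_iff_norm.mp hx.2
  have hip : ∀ u v : EuclideanSpace ℝ (Fin d), ‖u‖ = 1 → ‖v‖ = 1 →
      -1 ≤ (⟪u, v⟫ : ℝ) ∧ (⟪u, v⟫ : ℝ) ≤ 1 := by
    intro u v hu hv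
    have h := abs_real_inner_le_norm u v
    rw [hu, hv, mul_one] at h
    exact abs_le.mp h
  -- bddBelow of inner images
  have hbb2 : ∀ u, ‖u‖ = 1 → BddBelow ((fun v => (⟪u, v⟫ : ℝ)) '' S₂) := by
    intro u hu
    refine ⟨-1, ?_⟩
    rintro y ⟨v, hv, rfl⟩
    exact (hip u v hu (hnorm v hv)).1
  have hbb1 : ∀ u, ‖u‖ = 1 → BddBelow ((fun v => (⟪u, v⟫ : ℝ)) '' S₁) := by
    intro u hu
    exact (hbb2 u hu).mono (image_mono hS12)
  have hub1 : BddAbove (f₁ '' S₁) := by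
    refine ⟨1, ?_⟩
    rintro y ⟨u, hu, rfl⟩
    have h1 : (⟪u, u⟫ : ℝ) = 1 := by
      rw [real_inner_self_eq_norm_sq, hnorm u (hS12 hu)]; norm_num
    calc f₁ u ≤ (⟪u, u⟫ : ℝ) := csInf_le (hbb1 u (hnorm u (hS12 hu))) ⟨u, hu, rfl⟩
      _ = 1 := h1
  set c₂ := sSup (f₂ '' S₂) with hc₂
  have key : ∀ ε : ℝ, 0 < ε → Real.arccos (sSup (f₁ '' S₁)) ≤ 2 * Real.arccos (c₂ - ε) := by
    intro ε hε
    obtain ⟨y, ⟨w, hw, rfl⟩, hwgt⟩ := exists_lt_of_lt_csSup (hne2.image f₂)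
      (show c₂ - ε < c₂ by linarith)
    have hwn : ‖w‖ = 1 := hnorm w hw
    have hwv : ∀ v ∈ S₂, c₂ - ε ≤ (⟪w, v⟫ : ℝ) := by
      intro v hv
      exact le_trans hwgt.le (csInf_le (hbb2 w hwn) ⟨v, hv, rfl⟩)
    set θ := 2 * Real.arccos (c₂ - ε) with hθ
    have hθ0 : 0 ≤ θ := by
      have := Real.arccos_nonneg (c₂ - ε); linarith
    have hangle : ∀ u ∈ S₁, ∀ v ∈ S₁, Real.arccos (⟪u, v⟫ : ℝ) ≤ θ := by
      intro u hu v hv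
      have hun : ‖u‖ = 1 := hnorm u (hS12 hu)
      have hvn : ‖v‖ = 1 := hnorm v (hS12 hv)
      have h1 : Real.arccos (⟪u, v⟫ : ℝ) ≤ Real.arccos ⟪u, w⟫ + Real.arccos ⟪w, v⟫ :=
        arccos_inner_triangle hun hwn hvn
      have h2 : Real.arccos (⟪u, w⟫ : ℝ) ≤ Real.arccos (c₂ - ε) := by
        have : (⟪u, w⟫ : ℝ) = ⟪w, u⟫ := real_inner_comm w u
        rw [this]
        exact arccos_anti (hwv u (hS12 hu))
      have h3 : Real.arccos (⟪w, v⟫ : ℝ) ≤ Real.arccos (c₂ - ε) :=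
        arccos_anti (hwv v (hS12 hv))
      rw [hθ]; linarith
    by_cases hπ : θ ≤ π
    · obtain ⟨u₀, hu₀⟩ := hne1
      have h5 : Real.cos θ ≤ f₁ u₀ := by
        apply le_csInf ((Set.nonempty_of_mem hu₀).image fun v => (⟪u₀, v⟫ : ℝ))
        rintro y ⟨v, hv, rfl⟩
        have h6 := hangle u₀ hu₀ v hv
        have h7 := Real.cos_le_cos_of_nonneg_of_le_pi (Real.arccos_nonneg _) hπ h6
        have h8 := hip u₀ v (hnorm u₀ (hS12 hu₀)) (hnorm v (hS12 hv))
        rwa [Real.cos_arccos h8.1 h8.2] at h7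
      have h9 : Real.cos θ ≤ sSup (f₁ '' S₁) :=
        le_trans h5 (le_csSup hub1 ⟨u₀, hu₀, rfl⟩)
      calc Real.arccos (sSup (f₁ '' S₁)) ≤ Real.arccos (Real.cos θ) := arccos_anti h9
        _ = θ := Real.arccos_cos hθ0 hπ
    · push_neg at hπ
      linarith [Real.arccos_le_pi (sSup (f₁ '' S₁))]
  have hlim : Tendsto (fun ε : ℝ => 2 * Real.arccos (c₂ - ε)) (𝓝[>] (0:ℝ))
      (𝓝 (2 * Real.arccos c₂)) := by
    have hcont : Continuous fun ε : ℝ => 2 * Real.arccos (c₂ - ε) :=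
      continuous_const.mul (Real.continuous_arccos.comp (continuous_const.sub continuous_id))
    have h := hcont.tendsto 0
    simp only [sub_zero] at h
    exact h.mono_left nhdsWithin_le_nhds
  exact ge_of_tendsto hlim (eventually_nhdsWithin_of_forall fun ε hε => key ε hε)


abbrev E2 := EuclideanSpace ℝ (Fin 2)

def Ka : Set E2 := {x | (0 ≤ x 0 ∧ x 1 = 0) ∨ (0 ≤ x 1 ∧ x 0 = 0)}
def Kb : Set E2 := {x | (0 ≤ x 0 ∧ x 1 = 0) ∨ (0 ≤ x 1 ∧ x 0 = 0) ∨ (0 ≤ x 0 ∧ x 0 = x 1)}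

def e1 : E2 := EuclideanSpace.single 0 1
def e2 : E2 := EuclideanSpace.single 1 1
def w2 : E2 := WithLp.toLp 2 (fun _ => Real.sqrt 2 / 2)

lemma cont_apply (i : Fin 2) : Continuous fun x : E2 => x i :=
  (EuclideanSpace.proj i).continuous

lemma Ka_closed : IsClosed Ka := by
  apply IsClosed.union
  · exact (isClosed_le continuous_const (cont_apply 0)).inter
      (isClosed_eq (cont_apply 1) continuous_const)
  · exact (isClosed_le continuous_const (cont_apply 1)).inter
      (isClosed_eq (cont_apply 0) continuous_const)

lemma Kb_closed : IsClosed Kb := by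
  apply IsClosed.union
  · exact (isClosed_le continuous_const (cont_apply 0)).inter
      (isClosed_eq (cont_apply 1) continuous_const)
  apply IsClosed.union
  · exact (isClosed_le continuous_const (cont_apply 1)).inter
      (isClosed_eq (cont_apply 0) continuous_const)
  · exact (isClosed_le continuous_const (cont_apply 0)).inter
      (isClosed_eq (cont_apply 0) (cont_apply 1))

lemma smul_app (t : ℝ) (x : E2) (i : Fin 2) : (t • x) i = t * x i := rfl

lemma Ka_cone : ∀ t : ℝ, 0 < t → ∀ x ∈ Ka, t • x ∈ Ka := by
  intro t ht x hx
  rcases hx with ⟨h1, h2⟩ | ⟨h1, h2⟩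
  · left; constructor
    · rw [smul_app]; positivity
    · rw [smul_app, h2, mul_zero]
  · right; constructor
    · rw [smul_app]; positivity
    · rw [smul_app, h2, mul_zero]

lemma Kb_cone : ∀ t : ℝ, 0 < t → ∀ x ∈ Kb, t • x ∈ Kb := by
  intro t ht x hx
  rcases hx with ⟨h1, h2⟩ | ⟨h1, h2⟩ | ⟨h1, h2⟩
  · left; exact ⟨by rw [smul_app]; positivity, by rw [smul_app, h2, mul_zero]⟩
  · right; left; exact ⟨by rw [smul_app]; positivity, by rw [smul_app, h2, mul_zero]⟩
  · right; right; exact ⟨by rw [smul_app]; positivity, by rw [smul_app, smul_app, h2]⟩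

lemma norm_sq_eq (x : E2) : ‖x‖ ^ 2 = x 0 ^ 2 + x 1 ^ 2 := by
  rw [EuclideanSpace.norm_eq, Real.sq_sqrt (by positivity)]
  simp [Fin.sum_univ_two, sq_abs]

lemma mem_sphere_iff (x : E2) : x ∈ Metric.sphere (0 : E2) 1 ↔ x 0 ^ 2 + x 1 ^ 2 = 1 := by
  rw [mem_sphere_zero_iff_norm, ← norm_sq_eq]
  constructor
  · intro h; rw [h]; norm_num
  · intro h
    have hn := norm_nonneg x
    nlinarith

lemma e1_app0 : e1 0 = 1 := by simp [e1, EuclideanSpace.single_apply]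
lemma e1_app1 : e1 1 = 0 := by simp [e1, EuclideanSpace.single_apply]
lemma e2_app0 : e2 0 = 0 := by simp [e2, EuclideanSpace.single_apply]
lemma e2_app1 : e2 1 = 1 := by simp [e2, EuclideanSpace.single_apply]
lemma w2_app (i : Fin 2) : w2 i = Real.sqrt 2 / 2 := rfl

lemma sqrt2_sq : Real.sqrt 2 ^ 2 = 2 := Real.sq_sqrt (by norm_num)
lemma sqrt2_pos : 0 < Real.sqrt 2 := Real.sqrt_pos.mpr (by norm_num)
lemma sqrt2_lt : Real.sqrt 2 < 2 := by
  nlinarith [sqrt2_sq, sqrt2_pos]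

lemma inner2 (x y : E2) : (⟪x, y⟫ : ℝ) = x 0 * y 0 + x 1 * y 1 := by
  simp [PiLp.inner_apply, RCLike.inner_apply, Fin.sum_univ_two]; ring

lemma Sa_eq : Ka ∩ Metric.sphere 0 1 = {e1, e2} := by
  ext x
  constructor
  · rintro ⟨hK, hs⟩
    rw [mem_sphere_iff] at hs
    rcases hK with ⟨h1, h2⟩ | ⟨h1, h2⟩
    · left
      have hx0 : x 0 = 1 := by
        have : (x 0 - 1) * (x 0 + 1) = 0 := by nlinarith
        rcases mul_eq_zero.mp this with h | h
        · linarith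
        · linarith
      ext i
      fin_cases i
      · show x 0 = e1 0; rw [hx0, e1_app0]
      · show x 1 = e1 1; rw [h2, e1_app1]
    · right
      have hx1 : x 1 = 1 := by
        have : (x 1 - 1) * (x 1 + 1) = 0 := by nlinarith
        rcases mul_eq_zero.mp this with h | h
        · linarith
        · linarith
      show x = e2
      ext i
      fin_cases i
      · show x 0 = e2 0; rw [h2, e2_app0]
      · show x 1 = e2 1; rw [hx1, e2_app1]
  · rintro (rfl | rfl)
    · exact ⟨Or.inl ⟨by rw [e1_app0]; norm_num, e1_app1⟩,
        (mem_sphere_iff _).mpr (by rw [e1_app0, e1_app1]; norm_num)⟩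
    · exact ⟨Or.inr ⟨by rw [e2_app1]; norm_num, e2_app0⟩,
        (mem_sphere_iff _).mpr (by rw [e2_app0, e2_app1]; norm_num)⟩

lemma Sb_eq : Kb ∩ Metric.sphere 0 1 = {e1, e2, w2} := by
  ext x
  constructor
  · rintro ⟨hK, hs⟩
    rw [mem_sphere_iff] at hs
    rcases hK with ⟨h1, h2⟩ | ⟨h1, h2⟩ | ⟨h1, h2⟩
    · left
      have hx0 : x 0 = 1 := by
        have : (x 0 - 1) * (x 0 + 1) = 0 := by nlinarith
        rcases mul_eq_zero.mp this with h | h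
        · linarith
        · linarith
      ext i; fin_cases i
      · show x 0 = e1 0; rw [hx0, e1_app0]
      · show x 1 = e1 1; rw [h2, e1_app1]
    · right; left
      have hx1 : x 1 = 1 := by
        have : (x 1 - 1) * (x 1 + 1) = 0 := by nlinarith
        rcases mul_eq_zero.mp this with h | h
        · linarith
        · linarith
      show x = e2
      ext i; fin_cases i
      · show x 0 = e2 0; rw [h2, e2_app0]
      · show x 1 = e2 1; rw [hx1, e2_app1]
    · right; right
      have hx0 : x 0 = Real.sqrt 2 / 2 := by
        have hq : (x 0 - Real.sqrt 2 / 2) * (x 0 + Real.sqrt 2 / 2) = 0 := by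
          nlinarith [sqrt2_sq]
        rcases mul_eq_zero.mp hq with h | h
        · linarith
        · nlinarith [sqrt2_pos]
      show x = w2
      ext i; fin_cases i
      · show x 0 = w2 0; rw [hx0]; rfl
      · show x 1 = w2 1; rw [← h2, hx0]; rfl
  · rintro (rfl | rfl | rfl)
    · exact ⟨Or.inl ⟨by rw [e1_app0]; norm_num, e1_app1⟩,
        (mem_sphere_iff _).mpr (by rw [e1_app0, e1_app1]; norm_num)⟩
    · exact ⟨Or.inr (Or.inl ⟨by rw [e2_app1]; norm_num, e2_app0⟩),
        (mem_sphere_iff _).mpr (by rw [e2_app0, e2_app1]; norm_num)⟩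
    · refine ⟨Or.inr (Or.inr ⟨by rw [w2_app]; positivity, rfl⟩),
        (mem_sphere_iff _).mpr ?_⟩
      rw [w2_app, w2_app]
      nlinarith [sqrt2_sq]

lemma i11 : (⟪e1, e1⟫ : ℝ) = 1 := by rw [inner2, e1_app0, e1_app1]; norm_num
lemma i12 : (⟪e1, e2⟫ : ℝ) = 0 := by rw [inner2, e1_app0, e1_app1, e2_app0, e2_app1]; norm_num
lemma i21 : (⟪e2, e1⟫ : ℝ) = 0 := by rw [inner2, e1_app0, e1_app1, e2_app0, e2_app1]; norm_num
lemma i22 : (⟪e2, e2⟫ : ℝ) = 1 := by rw [inner2, e2_app0, e2_app1]; norm_num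
lemma i1w : (⟪e1, w2⟫ : ℝ) = Real.sqrt 2 / 2 := by
  rw [inner2, e1_app0, e1_app1, w2_app, w2_app]; ring
lemma i2w : (⟪e2, w2⟫ : ℝ) = Real.sqrt 2 / 2 := by
  rw [inner2, e2_app0, e2_app1, w2_app, w2_app]; ring
lemma iw1 : (⟪w2, e1⟫ : ℝ) = Real.sqrt 2 / 2 := by
  rw [inner2, e1_app0, e1_app1, w2_app, w2_app]; ring
lemma iw2 : (⟪w2, e2⟫ : ℝ) = Real.sqrt 2 / 2 := by
  rw [inner2, e2_app0, e2_app1, w2_app, w2_app]; ring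
lemma iww : (⟪w2, w2⟫ : ℝ) = 1 := by
  rw [inner2, w2_app, w2_app]
  nlinarith [sqrt2_sq]

lemma angleKa : coneAngle Ka = π / 2 := by
  unfold coneAngle
  rw [Sa_eq]
  simp only [Set.image_insert_eq, Set.image_singleton, i11, i12, i21, i22]
  rw [csInf_pair, csInf_pair]
  norm_num

lemma sqrt22_mem : Real.sqrt 2 / 2 ≤ 1 ∧ 0 ≤ Real.sqrt 2 / 2 :=
  ⟨by nlinarith [sqrt2_lt], by positivity⟩

lemma sInf_triple (a b c : ℝ) : sInf {a, b, c} = min a (min b c) := by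
  rw [csInf_insert ((Set.finite_singleton c).insert b).bddBelow ⟨b, Or.inl rfl⟩, csInf_pair]

lemma sSup_triple (a b c : ℝ) : sSup {a, b, c} = max a (max b c) := by
  rw [csSup_insert ((Set.finite_singleton c).insert b).bddAbove ⟨b, Or.inl rfl⟩, csSup_pair]

lemma angleKb : coneAngle Kb = π / 4 := by
  have h0 : (0:ℝ) ≤ Real.sqrt 2 / 2 := sqrt22_mem.2
  have h1 : Real.sqrt 2 / 2 ≤ 1 := sqrt22_mem.1
  unfold coneAngle
  rw [Sb_eq]
  simp only [Set.image_insert_eq, Set.image_singleton, i11, i12, i21, i22, i1w, i2w, iw1, iw2, iww]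
  rw [sInf_triple, sInf_triple, sInf_triple, sSup_triple]
  have hA : min (0:ℝ) (min 1 (Real.sqrt 2 / 2)) = 0 := min_eq_left (le_min (by norm_num) h0)
  have hB : min (1:ℝ) (min 0 (Real.sqrt 2 / 2)) = 0 := by
    rw [min_eq_left h0]; exact min_eq_right (by norm_num)
  have hC : min (Real.sqrt 2 / 2) (min (Real.sqrt 2 / 2) 1) = Real.sqrt 2 / 2 := by
    rw [min_eq_left h1, min_self]
  have hD : max (0:ℝ) (Real.sqrt 2 / 2) = Real.sqrt 2 / 2 := max_eq_right h0
  rw [hB, hA, hC, hD, hD]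
  exact Real.arccos_eq_of_eq_cos (by positivity) (by linarith [Real.pi_pos])
    Real.cos_pi_div_four.symm

/-- For nested nonempty closed cones `K₁ ⊆ K₂ ⊆ ℝ^d`, `∠K₁ ≤ 2 ∠K₂`; moreover this bound is
tight: there exist cones `K₁ ⊆ K₂` (in `ℝ²`) with `∠K₁ = 2 ∠K₂`. -/
theorem coneAngle_mono_of_subset :
    (∀ (d : ℕ) (K₁ K₂ : Set (EuclideanSpace ℝ (Fin d))),
      IsClosed K₁ → IsClosed K₂ →
      (∀ t : ℝ, 0 < t → ∀ x ∈ K₁, t • x ∈ K₁) →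
      (∀ t : ℝ, 0 < t → ∀ x ∈ K₂, t • x ∈ K₂) →
      (K₁ ∩ Metric.sphere 0 1).Nonempty → (K₂ ∩ Metric.sphere 0 1).Nonempty →
      K₁ ⊆ K₂ → coneAngle K₁ ≤ 2 * coneAngle K₂) ∧
    (∃ K₁ K₂ : Set (EuclideanSpace ℝ (Fin 2)),
      IsClosed K₁ ∧ IsClosed K₂ ∧
      (∀ t : ℝ, 0 < t → ∀ x ∈ K₁, t • x ∈ K₁) ∧
      (∀ t : ℝ, 0 < t → ∀ x ∈ K₂, t • x ∈ K₂) ∧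
      (K₁ ∩ Metric.sphere 0 1).Nonempty ∧ (K₂ ∩ Metric.sphere 0 1).Nonempty ∧
      K₁ ⊆ K₂ ∧ coneAngle K₁ = 2 * coneAngle K₂) := by
  constructor
  · intro d K₁ K₂ _ _ _ _ hne1 hne2 hsub
    exact coneAngle_part1 d K₁ K₂ hne1 hne2 hsub
  · refine ⟨Ka, Kb, Ka_closed, Kb_closed, Ka_cone, Kb_cone, ?_, ?_, ?_, ?_⟩
    · rw [Sa_eq]; exact ⟨e1, Or.inl rfl⟩
    · rw [Sb_eq]; exact ⟨e1, Or.inl rfl⟩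
    · rintro x (h | h)
      · exact Or.inl h
      · exact Or.inr (Or.inl h)
    · rw [angleKa, angleKb]; ring
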